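/- Completeness of the classical positive propositional calculus: a formula built from atoms using →, ∨, and & is a theorem of the Hilbert system with axiom schemes Ax1–Ax9 and modus ponens if and only if it is a tautology under Boolean valuations. -/

import Mathlib

inductive PFrm where
  | atom : Nat → PFrm
  | imp : PFrm → PFrm → PFrm
  | or : PFrm → PFrm → PFrm
  | and : PFrm → PFrm → PFrm

inductive PDeriv : Set PFrm → PFrm → Prop where
  | hyp {K A} : A ∈ K → PDeriv K A
  | ax1 {K} (A B : PFrm) : PDeriv K (A.imp (B.imp A))
  | ax2 {K} (A B C : PFrm) : PDeriv K ((A.imp (B.imp C)).imp ((A.imp B).imp (A.imp C)))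
  | ax3 {K} (A B : PFrm) : PDeriv K (((A.imp B).imp A).imp A)
  | ax4 {K} (A B : PFrm) : PDeriv K (A.imp (A.or B))
  | ax5 {K} (A B : PFrm) : PDeriv K (A.imp (B.or A))
  | ax6 {K} (A B C : PFrm) : PDeriv K ((A.imp C).imp ((B.imp C).imp ((A.or B).imp C)))
  | ax7 {K} (A B : PFrm) : PDeriv K ((A.and B).imp A)
  | ax8 {K} (A B : PFrm) : PDeriv K ((A.and B).imp B)
  | ax9 {K} (A B : PFrm) : PDeriv K (A.imp (B.imp (A.and B)))
  | mp {K A B} : PDeriv K (A.imp B) → PDeriv K A → PDeriv K B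

def PFrm.eval (v : Nat → Bool) : PFrm → Bool
  | .atom n => v n
  | .imp A B => !(A.eval v) || B.eval v
  | .or A B => A.eval v || B.eval v
  | .and A B => A.eval v && B.eval v

namespace PPos

theorem weaken {K K' : Set PFrm} {A : PFrm} (h : PDeriv K A) (hs : K ⊆ K') : PDeriv K' A := by
  induction h with
  | hyp hA => exact PDeriv.hyp (hs hA)
  | ax1 A B => exact PDeriv.ax1 A B
  | ax2 A B C => exact PDeriv.ax2 A B C
  | ax3 A B => exact PDeriv.ax3 A B
  | ax4 A B => exact PDeriv.ax4 A B
  | ax5 A B => exact PDeriv.ax5 A B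
  | ax6 A B C => exact PDeriv.ax6 A B C
  | ax7 A B => exact PDeriv.ax7 A B
  | ax8 A B => exact PDeriv.ax8 A B
  | ax9 A B => exact PDeriv.ax9 A B
  | mp _ _ ih1 ih2 => exact PDeriv.mp ih1 ih2

theorem ident (K : Set PFrm) (A : PFrm) : PDeriv K (A.imp A) :=
  PDeriv.mp (PDeriv.mp (PDeriv.ax2 A (A.imp A) A) (PDeriv.ax1 A (A.imp A))) (PDeriv.ax1 A A)

theorem ded {K : Set PFrm} {A B : PFrm} (h : PDeriv (insert A K) B) : PDeriv K (A.imp B) := by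
  generalize hK : insert A K = K' at h
  induction h with
  | @hyp B hB =>
    subst hK
    rcases hB with rfl | hB
    · exact ident K B
    · exact PDeriv.mp (PDeriv.ax1 B A) (PDeriv.hyp hB)
  | ax1 C D => exact PDeriv.mp (PDeriv.ax1 _ A) (PDeriv.ax1 C D)
  | ax2 C D E => exact PDeriv.mp (PDeriv.ax1 _ A) (PDeriv.ax2 C D E)
  | ax3 C D => exact PDeriv.mp (PDeriv.ax1 _ A) (PDeriv.ax3 C D)
  | ax4 C D => exact PDeriv.mp (PDeriv.ax1 _ A) (PDeriv.ax4 C D)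
  | ax5 C D => exact PDeriv.mp (PDeriv.ax1 _ A) (PDeriv.ax5 C D)
  | ax6 C D E => exact PDeriv.mp (PDeriv.ax1 _ A) (PDeriv.ax6 C D E)
  | ax7 C D => exact PDeriv.mp (PDeriv.ax1 _ A) (PDeriv.ax7 C D)
  | ax8 C D => exact PDeriv.mp (PDeriv.ax1 _ A) (PDeriv.ax8 C D)
  | ax9 C D => exact PDeriv.mp (PDeriv.ax1 _ A) (PDeriv.ax9 C D)
  | @mp C D _ _ ih1 ih2 =>
    exact PDeriv.mp (PDeriv.mp (PDeriv.ax2 A C D) ih1) ih2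

theorem finite_support {K : Set PFrm} {A : PFrm} (h : PDeriv K A) :
    ∃ K' : Set PFrm, K'.Finite ∧ K' ⊆ K ∧ PDeriv K' A := by
  induction h with
  | @hyp B hB => exact ⟨{B}, Set.finite_singleton B, Set.singleton_subset_iff.2 hB,
      PDeriv.hyp (Set.mem_singleton B)⟩
  | ax1 A B => exact ⟨∅, Set.finite_empty, Set.empty_subset _, PDeriv.ax1 A B⟩
  | ax2 A B C => exact ⟨∅, Set.finite_empty, Set.empty_subset _, PDeriv.ax2 A B C⟩
  | ax3 A B => exact ⟨∅, Set.finite_empty, Set.empty_subset _, PDeriv.ax3 A B⟩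
  | ax4 A B => exact ⟨∅, Set.finite_empty, Set.empty_subset _, PDeriv.ax4 A B⟩
  | ax5 A B => exact ⟨∅, Set.finite_empty, Set.empty_subset _, PDeriv.ax5 A B⟩
  | ax6 A B C => exact ⟨∅, Set.finite_empty, Set.empty_subset _, PDeriv.ax6 A B C⟩
  | ax7 A B => exact ⟨∅, Set.finite_empty, Set.empty_subset _, PDeriv.ax7 A B⟩
  | ax8 A B => exact ⟨∅, Set.finite_empty, Set.empty_subset _, PDeriv.ax8 A B⟩
  | ax9 A B => exact ⟨∅, Set.finite_empty, Set.empty_subset _, PDeriv.ax9 A B⟩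
  | mp _ _ ih1 ih2 =>
    obtain ⟨K1, hf1, hs1, hd1⟩ := ih1
    obtain ⟨K2, hf2, hs2, hd2⟩ := ih2
    exact ⟨K1 ∪ K2, hf1.union hf2, Set.union_subset hs1 hs2,
      PDeriv.mp (weaken hd1 Set.subset_union_left) (weaken hd2 Set.subset_union_right)⟩

theorem finite_subset_chain {c : Set (Set PFrm)} (hc : IsChain (· ⊆ ·) c)
    (hne : c.Nonempty) {s : Set PFrm} (hfin : s.Finite) (hsub : s ⊆ ⋃₀ c) :
    ∃ m ∈ c, s ⊆ m := by
  refine Set.Finite.induction_on (motive := fun s _ => s ⊆ ⋃₀ c → ∃ m ∈ c, s ⊆ m) s hfin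
    (fun _ => ⟨hne.choose, hne.choose_spec, Set.empty_subset _⟩) ?_ hsub
  intro x t _ _ ih hsub
  · rw [Set.insert_subset_iff] at hsub
    obtain ⟨m, hm, hmt⟩ := ih hsub.2
    obtain ⟨m', hm', hxm'⟩ := hsub.1
    rcases hc.total hm hm' with h | h
    · exact ⟨m', hm', Set.insert_subset hxm' (hmt.trans h)⟩
    · exact ⟨m, hm, Set.insert_subset (h hxm') hmt⟩

/-- From B→G and (B→C)→G derive G, using Peirce's law. -/
theorem peirce_combine {K : Set PFrm} {B C G : PFrm}
    (h1 : PDeriv K (B.imp G)) (h2 : PDeriv K ((B.imp C).imp G)) : PDeriv K G := by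
  have key : PDeriv K ((G.imp C).imp G) := by
    apply ded
    have hBC : PDeriv (insert (G.imp C) K) (B.imp C) := by
      apply ded
      have hB : PDeriv (insert B (insert (G.imp C) K)) B := PDeriv.hyp (Set.mem_insert _ _)
      have hG : PDeriv (insert B (insert (G.imp C) K)) G :=
        PDeriv.mp (weaken h1 (fun x hx => Set.mem_insert_iff.2
          (Or.inr (Set.mem_insert_iff.2 (Or.inr hx))))) hB
      exact PDeriv.mp (PDeriv.hyp (Set.mem_insert_iff.2 (Or.inr (Set.mem_insert _ _)))) hG
    exact PDeriv.mp (weaken h2 (Set.subset_insert _ _)) hBC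
  exact PDeriv.mp (PDeriv.ax3 G C) key

theorem soundness {K : Set PFrm} {A : PFrm} (h : PDeriv K A) (v : Nat → Bool)
    (hK : ∀ B ∈ K, B.eval v = true) : A.eval v = true := by
  induction h with
  | hyp hB => exact hK _ hB
  | ax1 A B => simp [PFrm.eval]; cases A.eval v <;> cases B.eval v <;> simp
  | ax2 A B C => simp [PFrm.eval]; cases A.eval v <;> cases B.eval v <;> cases C.eval v <;> simp
  | ax3 A B => simp [PFrm.eval]; cases A.eval v <;> cases B.eval v <;> simp
  | ax4 A B => simp [PFrm.eval]; cases A.eval v <;> cases B.eval v <;> simp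
  | ax5 A B => simp [PFrm.eval]; cases A.eval v <;> cases B.eval v <;> simp
  | ax6 A B C => simp [PFrm.eval]; cases A.eval v <;> cases B.eval v <;> cases C.eval v <;> simp
  | ax7 A B => simp [PFrm.eval]; cases A.eval v <;> cases B.eval v <;> simp
  | ax8 A B => simp [PFrm.eval]; cases A.eval v <;> cases B.eval v <;> simp
  | ax9 A B => simp [PFrm.eval]; cases A.eval v <;> cases B.eval v <;> simp
  | mp _ _ ih1 ih2 =>
    simp [PFrm.eval, ih2] at ih1
    exact ih1

end PPos

theorem stmt18 (A : PFrm) :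
    PDeriv ∅ A ↔ ∀ v : Nat → Bool, A.eval v = true := by
  constructor
  · intro h v
    exact PPos.soundness h v (by simp)
  · intro htaut
    by_contra hnd
    classical
    -- Zorn: maximal Δ ⊇ ∅ with Δ ⊬ A
    obtain ⟨Δ, -, hΔmax⟩ := zorn_subset_nonempty {K : Set PFrm | ¬ PDeriv K A}
      (by
        intro c hcS hchain hcne
        refine ⟨⋃₀ c, ?_, fun s hs => Set.subset_sUnion_of_mem hs⟩
        intro hder
        obtain ⟨K', hfin, hsub, hd⟩ := PPos.finite_support hder
        obtain ⟨m, hm, hKm⟩ := PPos.finite_subset_chain hchain hcne hfin hsub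
        exact hcS hm (PPos.weaken hd hKm)) ∅ hnd
    have hΔ : ¬ PDeriv Δ A := hΔmax.prop
    -- maximality: anything not in Δ, adding it derives A
    have hmax : ∀ B : PFrm, B ∉ Δ → PDeriv (insert B Δ) A := by
      intro B hB
      by_contra h
      exact hB (hΔmax.mem_of_prop_insert h)
    -- closure: Δ ⊢ B → B ∈ Δ
    have hclosed : ∀ B : PFrm, PDeriv Δ B → B ∈ Δ := by
      intro B hB
      by_contra h
      exact hΔ (PDeriv.mp (PPos.ded (hmax B h)) hB)
    let v : Nat → Bool := fun n => decide (PFrm.atom n ∈ Δ)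
    -- truth lemma
    have truth : ∀ B : PFrm, B ∈ Δ ↔ B.eval v = true := by
      intro B
      induction B with
      | atom n =>
        show PFrm.atom n ∈ Δ ↔ decide (PFrm.atom n ∈ Δ) = true
        simp
      | imp B C ihB ihC =>
        simp only [PFrm.eval, Bool.or_eq_true, Bool.not_eq_true']
        constructor
        · intro h
          rcases hB : B.eval v with _ | _
          · exact Or.inl rfl
          · exact Or.inr (ihC.1 (hclosed C (PDeriv.mp (PDeriv.hyp h)
              (PDeriv.hyp (ihB.2 hB)))))
        · intro h
          rcases h with h | h
          · -- B false: B ∉ Δ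
            have hBn : B ∉ Δ := fun hm => by simp [ihB.1 hm] at h
            by_contra hBC
            have h1 : PDeriv Δ (B.imp A) := PPos.ded (hmax B hBn)
            have h2 : PDeriv Δ ((B.imp C).imp A) := PPos.ded (hmax _ hBC)
            exact hΔ (PPos.peirce_combine h1 h2)
          · exact hclosed _ (PDeriv.mp (PDeriv.ax1 C B) (PDeriv.hyp (ihC.2 h)))
      | or B C ihB ihC =>
        simp only [PFrm.eval, Bool.or_eq_true]
        constructor
        · intro h
          by_contra hcon
          push_neg at hcon
          have hBn : B ∉ Δ := fun hm => hcon.1 (ihB.1 hm)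
          have hCn : C ∉ Δ := fun hm => hcon.2 (ihC.1 hm)
          have h1 : PDeriv Δ (B.imp A) := PPos.ded (hmax B hBn)
          have h2 : PDeriv Δ (C.imp A) := PPos.ded (hmax C hCn)
          exact hΔ (PDeriv.mp (PDeriv.mp (PDeriv.mp (PDeriv.ax6 B C A) h1) h2)
            (PDeriv.hyp h))
        · intro h
          rcases h with h | h
          · exact hclosed _ (PDeriv.mp (PDeriv.ax4 B C) (PDeriv.hyp (ihB.2 h)))
          · exact hclosed _ (PDeriv.mp (PDeriv.ax5 C B) (PDeriv.hyp (ihC.2 h)))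
      | and B C ihB ihC =>
        simp only [PFrm.eval, Bool.and_eq_true]
        constructor
        · intro h
          exact ⟨ihB.1 (hclosed _ (PDeriv.mp (PDeriv.ax7 B C) (PDeriv.hyp h))),
            ihC.1 (hclosed _ (PDeriv.mp (PDeriv.ax8 B C) (PDeriv.hyp h)))⟩
        · intro ⟨h1, h2⟩
          exact hclosed _ (PDeriv.mp (PDeriv.mp (PDeriv.ax9 B C)
            (PDeriv.hyp (ihB.2 h1))) (PDeriv.hyp (ihC.2 h2)))
    have : A ∈ Δ := (truth A).2 (htaut v)
    exact hΔ (PDeriv.hyp this)
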